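/- Let Φ ∈ ℝ^{N×D} and let (Φ̂_n)_{n∈ℕ} be a sequence in ℝ^{M×D}. Set δ_n := ‖Φ̂_n − PΦ‖_F and let (ω_n)_{n∈ℕ} be a sequence of positive reals. Assume (i) δ_n → 0, (ii) ω_n → 0, and (iii) δ_n²/ω_n → 0 as n → ∞. For each n, let Φ_n* ∈ ℝ^{N×D} be a minimizer over ℝ^{N×D} of J_n(Θ) := (1/2)‖PΘ − Φ̂_n‖_F² + ω_n R(Θ). Then Φ_n* converges, as n → ∞, to the unique matrix Φ_∞* minimizing R(Θ) over the set {Θ ∈ ℝ^{N×D} : PΘ = PΦ}. -/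

import Mathlib

open Matrix Filter Topology

/-- The Frobenius norm of a real matrix. -/
noncomputable def frobNorm {m n : ℕ} (A : Matrix (Fin m) (Fin n) ℝ) : ℝ :=
  Real.sqrt (Matrix.trace (Aᵀ * A))

/-- The matrix `(I_M 0) ∈ ℝ^{M×N}` extracting the first `M` rows. -/
def extractP (M N : ℕ) : Matrix (Fin M) (Fin N) ℝ :=
  Matrix.of fun i j => if (i : ℕ) = (j : ℕ) then 1 else 0

namespace CRaux

/-- squared Frobenius norm as a sum of squares -/
noncomputable def fns {m n : ℕ} (A : Matrix (Fin m) (Fin n) ℝ) : ℝ :=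
  ∑ i, ∑ j, (A i j) ^ 2

/-- Frobenius inner product -/
noncomputable def ip {m n : ℕ} (A C : Matrix (Fin m) (Fin n) ℝ) : ℝ :=
  ∑ i, ∑ j, A i j * C i j

variable {m n : ℕ}

lemma fns_nonneg (A : Matrix (Fin m) (Fin n) ℝ) : 0 ≤ fns A :=
  Finset.sum_nonneg fun _ _ => Finset.sum_nonneg fun _ _ => sq_nonneg _

lemma ip_trace (U C : Matrix (Fin m) (Fin n) ℝ) : Matrix.trace (Uᵀ * C) = ip U C := by
  simp only [Matrix.trace, Matrix.diag, Matrix.mul_apply, Matrix.transpose_apply, ip]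
  exact Finset.sum_comm

lemma ip_self (A : Matrix (Fin m) (Fin n) ℝ) : ip A A = fns A := by
  simp [ip, fns, sq]

lemma frobNorm_eq (A : Matrix (Fin m) (Fin n) ℝ) : frobNorm A = Real.sqrt (fns A) := by
  rw [frobNorm, ip_trace, ip_self]

lemma frobNorm_sq (A : Matrix (Fin m) (Fin n) ℝ) : frobNorm A ^ 2 = fns A := by
  rw [frobNorm_eq, Real.sq_sqrt (fns_nonneg A)]

lemma fns_neg (A : Matrix (Fin m) (Fin n) ℝ) : fns (-A) = fns A := by
  simp [fns]

lemma ip_comm (A C : Matrix (Fin m) (Fin n) ℝ) : ip A C = ip C A := by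
  simp [ip, mul_comm]

lemma ip_add_left (A A' C : Matrix (Fin m) (Fin n) ℝ) :
    ip (A + A') C = ip A C + ip A' C := by
  simp only [ip, Matrix.add_apply, add_mul, Finset.sum_add_distrib]

lemma ip_add_right (A C C' : Matrix (Fin m) (Fin n) ℝ) :
    ip A (C + C') = ip A C + ip A C' := by
  simp only [ip, Matrix.add_apply, mul_add, Finset.sum_add_distrib]

lemma ip_smul_left (t : ℝ) (A C : Matrix (Fin m) (Fin n) ℝ) :
    ip (t • A) C = t * ip A C := by
  simp only [ip, Matrix.smul_apply, smul_eq_mul, Finset.mul_sum]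
  exact Finset.sum_congr rfl fun _ _ => Finset.sum_congr rfl fun _ _ => by ring

lemma ip_smul_right (t : ℝ) (A C : Matrix (Fin m) (Fin n) ℝ) :
    ip A (t • C) = t * ip A C := by
  rw [ip_comm, ip_smul_left, ip_comm]

lemma fns_add (A C : Matrix (Fin m) (Fin n) ℝ) :
    fns (A + C) = fns A + 2 * ip A C + fns C := by
  simp only [fns, ip, Matrix.add_apply, Finset.mul_sum, ← Finset.sum_add_distrib]
  exact Finset.sum_congr rfl fun _ _ => Finset.sum_congr rfl fun _ _ => by ring

lemma ip_prod (A C : Matrix (Fin m) (Fin n) ℝ) :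
    ip A C = ∑ p : Fin m × Fin n, A p.1 p.2 * C p.1 p.2 :=
  (Fintype.sum_prod_type (f := fun p : Fin m × Fin n => A p.1 p.2 * C p.1 p.2)).symm

lemma fns_prod (A : Matrix (Fin m) (Fin n) ℝ) :
    fns A = ∑ p : Fin m × Fin n, (A p.1 p.2) ^ 2 :=
  (Fintype.sum_prod_type (f := fun p : Fin m × Fin n => (A p.1 p.2) ^ 2)).symm

lemma abs_ip_le (A C : Matrix (Fin m) (Fin n) ℝ) :
    |ip A C| ≤ Real.sqrt (fns A) * Real.sqrt (fns C) := by
  have h := Finset.sum_mul_sq_le_sq_mul_sq Finset.univ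
    (fun p : Fin m × Fin n => A p.1 p.2) (fun p : Fin m × Fin n => C p.1 p.2)
  rw [← ip_prod, ← fns_prod, ← fns_prod] at h
  calc |ip A C| = Real.sqrt ((ip A C) ^ 2) := (Real.sqrt_sq_eq_abs _).symm
    _ ≤ Real.sqrt (fns A * fns C) := Real.sqrt_le_sqrt h
    _ = Real.sqrt (fns A) * Real.sqrt (fns C) := Real.sqrt_mul (fns_nonneg A) _

lemma sqrt_fns_add_le (A C : Matrix (Fin m) (Fin n) ℝ) :
    Real.sqrt (fns (A + C)) ≤ Real.sqrt (fns A) + Real.sqrt (fns C) := by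
  have h := abs_ip_le A C
  have hA : Real.sqrt (fns A) ^ 2 = fns A := Real.sq_sqrt (fns_nonneg A)
  have hC : Real.sqrt (fns C) ^ 2 = fns C := Real.sq_sqrt (fns_nonneg C)
  have hAC : ip A C ≤ |ip A C| := le_abs_self _
  have h2 : fns (A + C) ≤ (Real.sqrt (fns A) + Real.sqrt (fns C)) ^ 2 := by
    rw [fns_add]; nlinarith
  calc Real.sqrt (fns (A + C)) ≤ Real.sqrt ((Real.sqrt (fns A) + Real.sqrt (fns C)) ^ 2) :=
        Real.sqrt_le_sqrt h2
    _ = |Real.sqrt (fns A) + Real.sqrt (fns C)| := Real.sqrt_sq_eq_abs _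
    _ = Real.sqrt (fns A) + Real.sqrt (fns C) := abs_of_nonneg
        (add_nonneg (Real.sqrt_nonneg _) (Real.sqrt_nonneg _))

lemma fns_pos {A : Matrix (Fin m) (Fin n) ℝ} (hA : A ≠ 0) : 0 < fns A := by
  have : ∃ i j, A i j ≠ 0 := by
    by_contra h
    push_neg at h
    exact hA (by ext i j; simpa using h i j)
  obtain ⟨i, j, hij⟩ := this
  have h1 : (A i j) ^ 2 ≤ ∑ j', (A i j') ^ 2 :=
    Finset.single_le_sum (f := fun j' => (A i j') ^ 2) (fun _ _ => sq_nonneg _)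
      (Finset.mem_univ j)
  have h2 : ∑ j', (A i j') ^ 2 ≤ fns A :=
    Finset.single_le_sum (f := fun i => ∑ j', (A i j') ^ 2)
      (fun _ _ => Finset.sum_nonneg fun _ _ => sq_nonneg _) (Finset.mem_univ i)
  have := sq_pos_of_ne_zero hij
  linarith

lemma fns_smul (t : ℝ) (A : Matrix (Fin m) (Fin n) ℝ) : fns (t • A) = t ^ 2 * fns A := by
  simp only [fns, Matrix.smul_apply, smul_eq_mul, mul_pow, Finset.mul_sum]

lemma continuous_fns : Continuous (fns : Matrix (Fin m) (Fin n) ℝ → ℝ) := by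
  apply continuous_finset_sum
  intro i _
  apply continuous_finset_sum
  intro j _
  exact ((continuous_apply j).comp (continuous_apply i)).pow 2

lemma entry_sq_le_fns (A : Matrix (Fin m) (Fin n) ℝ) (i : Fin m) (j : Fin n) :
    (A i j) ^ 2 ≤ fns A := by
  have h1 : (A i j) ^ 2 ≤ ∑ j', (A i j') ^ 2 :=
    Finset.single_le_sum (f := fun j' => (A i j') ^ 2) (fun _ _ => sq_nonneg _)
      (Finset.mem_univ j)
  have h2 : ∑ j', (A i j') ^ 2 ≤ fns A :=
    Finset.single_le_sum (f := fun i => ∑ j', (A i j') ^ 2)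
      (fun _ _ => Finset.sum_nonneg fun _ _ => sq_nonneg _) (Finset.mem_univ i)
  linarith

/-- a quadratic polynomial nonneg everywhere with zero constant term has zero
linear coefficient -/
lemma quad_zero (a b : ℝ) (ha : 0 ≤ a) (h : ∀ t : ℝ, 0 ≤ 2 * t * b + t ^ 2 * a) : b = 0 := by
  rcases eq_or_lt_of_le ha with ha0 | ha0
  · have h1 := h (-b)
    rw [← ha0] at h1
    nlinarith
  · have h1 := h (-b / a)
    have h2 : 2 * (-b / a) * b + (-b / a) ^ 2 * a = -(b ^ 2) / a := by
      field_simp; ring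
    rw [h2] at h1
    have h3 : 0 ≤ -(b ^ 2) := by
      have := mul_nonneg h1 ha0.le
      rwa [div_mul_cancel₀ _ (ne_of_gt ha0)] at this
    nlinarith

section Quad

variable {N D : ℕ} (B : Matrix (Fin N) (Fin N) ℝ)

lemma ip_B_symm (hBs : Bᵀ = B) (U V : Matrix (Fin N) (Fin D) ℝ) :
    ip U (B * V) = ip (B * U) V := by
  calc ip U (B * V) = Matrix.trace (Uᵀ * (B * V)) := (ip_trace _ _).symm
    _ = Matrix.trace ((B * U)ᵀ * V) := by
        rw [Matrix.transpose_mul, Matrix.mul_assoc, hBs]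
    _ = ip (B * U) V := ip_trace _ _

lemma q_eq_ip (Θ : Matrix (Fin N) (Fin D) ℝ) :
    Matrix.trace (Θᵀ * B * Θ) = ip Θ (B * Θ) := by
  rw [Matrix.mul_assoc]; exact ip_trace _ _

lemma qf_add (hBs : Bᵀ = B) (U V : Matrix (Fin N) (Fin D) ℝ) :
    ip (U + V) (B * (U + V)) = ip U (B * U) + 2 * ip U (B * V) + ip V (B * V) := by
  have hVU : ip V (B * U) = ip U (B * V) := by
    rw [ip_B_symm B hBs V U, ip_comm]
  rw [Matrix.mul_add, ip_add_left, ip_add_right, ip_add_right, hVU]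
  ring

lemma qf_smul (t : ℝ) (V : Matrix (Fin N) (Fin D) ℝ) :
    ip (t • V) (B * (t • V)) = t ^ 2 * ip V (B * V) := by
  rw [Matrix.mul_smul, ip_smul_left, ip_smul_right]; ring

lemma qf_eq_sum_cols (E : Matrix (Fin N) (Fin D) ℝ) :
    ip E (B * E) = ∑ j, (fun i => E i j) ⬝ᵥ (B *ᵥ fun i => E i j) := by
  simp only [ip, Matrix.mul_apply, dotProduct, Matrix.mulVec]
  exact Finset.sum_comm

lemma continuous_qf : Continuous (fun E : Matrix (Fin N) (Fin D) ℝ => ip E (B * E)) := by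
  have : (fun E : Matrix (Fin N) (Fin D) ℝ => ip E (B * E)) =
      fun E => ∑ i, ∑ j, E i j * ∑ k, B i k * E k j := by
    funext E
    simp only [ip, Matrix.mul_apply]
  rw [this]
  apply continuous_finset_sum; intro i _
  apply continuous_finset_sum; intro j _
  refine Continuous.mul ((continuous_apply j).comp (continuous_apply i)) ?_
  apply continuous_finset_sum; intro k _
  exact continuous_const.mul ((continuous_apply j).comp (continuous_apply k))

lemma qf_pos (hB : B.PosDef) {E : Matrix (Fin N) (Fin D) ℝ} (hE : E ≠ 0) :
    0 < ip E (B * E) := by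
  rw [qf_eq_sum_cols]
  have hterm : ∀ j, (fun i => E i j) ≠ 0 → 0 < (fun i => E i j) ⬝ᵥ (B *ᵥ fun i => E i j) := by
    intro j hj
    have := hB.dotProduct_mulVec_pos hj
    simpa using this
  have hnn : ∀ j ∈ Finset.univ, 0 ≤ (fun i => E i j) ⬝ᵥ (B *ᵥ fun i => E i j) := by
    intro j _
    by_cases hj : (fun i => E i j) = 0
    · rw [hj]; simp
    · exact (hterm j hj).le
  have hex : ∃ j ∈ Finset.univ, 0 < (fun i => E i j) ⬝ᵥ (B *ᵥ fun i => E i j) := by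
    have : ∃ i j, E i j ≠ 0 := by
      by_contra h
      push_neg at h
      exact hE (by ext i j; simpa using h i j)
    obtain ⟨i, j, hij⟩ := this
    refine ⟨j, Finset.mem_univ _, hterm j ?_⟩
    intro h0
    exact hij (congrFun h0 i)
  exact Finset.sum_pos' hnn hex

lemma qf_nonneg (hB : B.PosDef) (E : Matrix (Fin N) (Fin D) ℝ) :
    0 ≤ ip E (B * E) := by
  by_cases hE : E = 0
  · subst hE; simp [ip]
  · exact (qf_pos B hB hE).le

/-- coercivity of a positive definite quadratic form -/
lemma exists_coercive (hN : 0 < N) (hD : 0 < D) (hB : B.PosDef) :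
    ∃ c > 0, ∀ E : Matrix (Fin N) (Fin D) ℝ, c * fns E ≤ ip E (B * E) := by
  classical
  set Sph : Set (Matrix (Fin N) (Fin D) ℝ) := {E | fns E = 1} with hSph
  -- Sph is compact
  have hbox : IsCompact (Set.univ.pi fun _ : Fin N =>
      Set.univ.pi fun _ : Fin D => Set.Icc (-1 : ℝ) 1) :=
    isCompact_univ_pi fun _ => isCompact_univ_pi fun _ => isCompact_Icc
  have hsub : Sph ⊆ Set.univ.pi fun _ : Fin N =>
      Set.univ.pi fun _ : Fin D => Set.Icc (-1 : ℝ) 1 := by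
    intro E hE
    intro i _
    intro j _
    have h1 : (E i j) ^ 2 ≤ 1 := by
      have := entry_sq_le_fns E i j
      rw [hE] at this
      exact this
    have h2 : |E i j| ≤ 1 := by
      rw [← Real.sqrt_one, ← Real.sqrt_sq_eq_abs]
      exact Real.sqrt_le_sqrt h1
    exact ⟨by linarith [abs_le.mp h2], by linarith [abs_le.mp h2]⟩
  have hclosed : IsClosed Sph := isClosed_eq continuous_fns continuous_const
  have hcmp : IsCompact Sph := hbox.of_isClosed_subset hclosed hsub
  -- Sph is nonempty
  have hne : Sph.Nonempty := by
    refine ⟨Matrix.of fun i j => if i = ⟨0, hN⟩ then (if j = ⟨0, hD⟩ then 1 else 0) else 0, ?_⟩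
    show fns _ = 1
    simp [fns, apply_ite (· ^ 2), Finset.sum_ite_eq']
  obtain ⟨E1, hE1mem, hE1min⟩ := hcmp.exists_isMinOn hne (continuous_qf B).continuousOn
  have hE1ne : E1 ≠ 0 := by
    intro h0
    rw [hSph] at hE1mem
    simp only [Set.mem_setOf_eq, h0] at hE1mem
    simp [fns] at hE1mem
  refine ⟨ip E1 (B * E1), qf_pos B hB hE1ne, ?_⟩
  intro E
  by_cases hE : E = 0
  · subst hE; simp [ip, fns]
  · have hfE : 0 < fns E := fns_pos hE
    set t : ℝ := Real.sqrt (fns E) with ht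
    have htpos : 0 < t := Real.sqrt_pos.mpr hfE
    have ht2 : t ^ 2 = fns E := Real.sq_sqrt hfE.le
    set V : Matrix (Fin N) (Fin D) ℝ := t⁻¹ • E with hV
    have hVmem : V ∈ Sph := by
      show fns V = 1
      rw [hV, fns_smul, ← ht2]
      field_simp
    have hEV : E = t • V := by
      rw [hV, smul_smul, mul_inv_cancel₀ (ne_of_gt htpos), one_smul]
    have hmin := isMinOn_iff.mp hE1min V hVmem
    calc ip E1 (B * E1) * fns E = ip E1 (B * E1) * t ^ 2 := by rw [ht2]
      _ ≤ ip V (B * V) * t ^ 2 := by nlinarith [sq_nonneg t]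
      _ = ip E (B * E) := by
          conv_rhs => rw [hEV, qf_smul]
          ring

end Quad

section ExtractP

variable {N D M : ℕ}

lemma P_mul_Pt (hMN : M ≤ N) :
    extractP M N * (extractP M N)ᵀ = (1 : Matrix (Fin M) (Fin M) ℝ) := by
  ext i i'
  rw [Matrix.mul_apply]
  have hiN : (i : ℕ) < N := lt_of_lt_of_le i.isLt hMN
  rw [Finset.sum_eq_single (⟨(i : ℕ), hiN⟩ : Fin N)]
  · simp only [extractP, Matrix.transpose_apply, Matrix.of_apply, Matrix.one_apply]
    by_cases h : i = i'
    · subst h; simp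
    · have : (i' : ℕ) ≠ (i : ℕ) := fun hc => h (Fin.ext hc.symm)
      simp [h, this]
  · intro j _ hj
    have : (i : ℕ) ≠ (j : ℕ) := by
      intro hc
      exact hj (Fin.ext hc.symm)
    simp [extractP, this]
  · intro h
    exact absurd (Finset.mem_univ _) h

lemma fns_Pt_mul (hMN : M ≤ N) (A : Matrix (Fin M) (Fin D) ℝ) :
    fns ((extractP M N)ᵀ * A) = fns A := by
  have key : ((extractP M N)ᵀ * A)ᵀ * ((extractP M N)ᵀ * A) = Aᵀ * A := by
    rw [Matrix.transpose_mul, Matrix.transpose_transpose, Matrix.mul_assoc,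
      ← Matrix.mul_assoc (extractP M N), P_mul_Pt hMN, Matrix.one_mul]
  have h1 : fns ((extractP M N)ᵀ * A) = Matrix.trace (((extractP M N)ᵀ * A)ᵀ * ((extractP M N)ᵀ * A)) := by
    rw [ip_trace, ip_self]
  rw [h1, key, ip_trace, ip_self]

lemma continuous_P_mul (P : Matrix (Fin M) (Fin N) ℝ) :
    Continuous (fun Θ : Matrix (Fin N) (Fin D) ℝ => P * Θ) := by
  apply continuous_pi; intro i
  apply continuous_pi; intro j
  have : (fun Θ : Matrix (Fin N) (Fin D) ℝ => (P * Θ) i j) =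
      fun Θ => ∑ k, P i k * Θ k j := by
    funext Θ; rw [Matrix.mul_apply]
  rw [this]
  apply continuous_finset_sum; intro k _
  exact continuous_const.mul ((continuous_apply j).comp (continuous_apply k))

end ExtractP

end CRaux

open CRaux in
/-- Theorem 5.2 (convergent regularization): if the high-fidelity error `δ_n → 0`,
the regularization strengths `ω_n → 0`, and `δ_n²/ω_n → 0`, then the minimizers
`Φ_n*` of `J_n` converge to the unique minimizer of `R` on `{Θ : PΘ = PΦ}`. -/
theorem convergent_regularization
    (N D M : ℕ) (hN : 0 < N) (hD : 0 < D) (hM : 0 < M) (hMN : M ≤ N)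
    (B : Matrix (Fin N) (Fin N) ℝ) (hB : B.PosDef)
    (R : Matrix (Fin N) (Fin D) ℝ → ℝ)
    (hR : ∀ Θ, R Θ = Matrix.trace (Θᵀ * B * Θ))
    (Φ : Matrix (Fin N) (Fin D) ℝ)
    (Φhat : ℕ → Matrix (Fin M) (Fin D) ℝ)
    (ω : ℕ → ℝ) (hωpos : ∀ n, 0 < ω n)
    (δ : ℕ → ℝ) (hδ : ∀ n, δ n = frobNorm (Φhat n - extractP M N * Φ))
    (hδ0 : Tendsto δ atTop (nhds 0))
    (hω0 : Tendsto ω atTop (nhds 0))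
    (hratio : Tendsto (fun n => (δ n) ^ 2 / ω n) atTop (nhds 0))
    (Φstar : ℕ → Matrix (Fin N) (Fin D) ℝ)
    (hmin : ∀ n, ∀ Θ : Matrix (Fin N) (Fin D) ℝ,
      (1 / 2) * (frobNorm (extractP M N * Φstar n - Φhat n)) ^ 2 + ω n * R (Φstar n) ≤
      (1 / 2) * (frobNorm (extractP M N * Θ - Φhat n)) ^ 2 + ω n * R Θ) :
    ∃ Φinf : Matrix (Fin N) (Fin D) ℝ,
      extractP M N * Φinf = extractP M N * Φ ∧
      (∀ Θ, extractP M N * Θ = extractP M N * Φ → R Φinf ≤ R Θ) ∧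
      (∀ Θ', extractP M N * Θ' = extractP M N * Φ →
        (∀ Θ, extractP M N * Θ = extractP M N * Φ → R Θ' ≤ R Θ) → Θ' = Φinf) ∧
      Tendsto Φstar atTop (nhds Φinf) := by
  classical
  set P : Matrix (Fin M) (Fin N) ℝ := extractP M N with hP
  set qf : Matrix (Fin N) (Fin D) ℝ → ℝ := fun Θ => ip Θ (B * Θ) with hqf
  have hRq : ∀ Θ, R Θ = qf Θ := by
    intro Θ; rw [hR, q_eq_ip]
  have hBs : Bᵀ = B := by
    have := hB.1
    rwa [Matrix.IsHermitian, Matrix.conjTranspose_eq_transpose_of_trivial] at this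
  obtain ⟨c, hc, hcoer⟩ := exists_coercive B hN hD hB
  -- existence of a minimizer of qf on {Θ | P Θ = P Φ}
  set r : ℝ := max (fns Φ) (qf Φ / c) with hr
  set K : Set (Matrix (Fin N) (Fin D) ℝ) := {Θ | P * Θ = P * Φ} ∩ {Θ | fns Θ ≤ r} with hK
  have hΦK : Φ ∈ K := by
    refine ⟨rfl, ?_⟩
    show fns Φ ≤ r
    rw [hr]; exact le_max_left _ _
  have hKne : K.Nonempty := ⟨Φ, hΦK⟩
  have hKclosed : IsClosed K :=
    (isClosed_eq (continuous_P_mul P) continuous_const).inter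
      (isClosed_le continuous_fns continuous_const)
  have hKsub : K ⊆ Set.univ.pi fun _ : Fin N =>
      Set.univ.pi fun _ : Fin D => Set.Icc (-(Real.sqrt r)) (Real.sqrt r) := by
    rintro Θ ⟨-, hΘ2⟩ i _ j _
    have h1 : (Θ i j) ^ 2 ≤ r := le_trans (entry_sq_le_fns Θ i j) hΘ2
    have h2 : |Θ i j| ≤ Real.sqrt r := by
      rw [← Real.sqrt_sq_eq_abs]
      exact Real.sqrt_le_sqrt h1
    exact ⟨by linarith [abs_le.mp h2], by linarith [abs_le.mp h2]⟩
  have hKcmp : IsCompact K :=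
    (isCompact_univ_pi fun _ => isCompact_univ_pi fun _ => isCompact_Icc).of_isClosed_subset
      hKclosed hKsub
  obtain ⟨Φinf, hmemK, hminK⟩ := hKcmp.exists_isMinOn hKne (continuous_qf B).continuousOn
  have hPinf : P * Φinf = P * Φ := hmemK.1
  have hglobal : ∀ Θ, P * Θ = P * Φ → qf Φinf ≤ qf Θ := by
    intro Θ hΘ
    by_cases hΘK : fns Θ ≤ r
    · exact isMinOn_iff.mp hminK Θ ⟨hΘ, hΘK⟩
    · push_neg at hΘK
      have h1 : qf Φinf ≤ qf Φ := isMinOn_iff.mp hminK Φ hΦK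
      have h2 : qf Φ / c ≤ r := le_max_right _ _
      have h3 := hcoer Θ
      have h4 : qf Φ ≤ c * r := by
        rw [div_le_iff₀ hc] at h2; linarith [h2]
      nlinarith
  -- first-order optimality condition
  have hfo : ∀ V : Matrix (Fin N) (Fin D) ℝ, P * V = 0 → ip Φinf (B * V) = 0 := by
    intro V hV
    have ha : 0 ≤ qf V := qf_nonneg B hB V
    apply quad_zero (qf V) _ ha
    intro t
    have hmem : P * (Φinf + t • V) = P * Φ := by
      rw [Matrix.mul_add, Matrix.mul_smul, hV, smul_zero, add_zero, hPinf]
    have h := hglobal _ hmem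
    have hexp : qf (Φinf + t • V) = qf Φinf + 2 * (t * ip Φinf (B * V)) + t ^ 2 * qf V := by
      rw [hqf]
      simp only
      rw [qf_add B hBs, qf_smul, Matrix.mul_smul, ip_smul_right]
    rw [hexp] at h
    have : 0 ≤ 2 * (t * ip Φinf (B * V)) + t ^ 2 * qf V := by linarith
    linarith [this]
  refine ⟨Φinf, hPinf, ?_, ?_, ?_⟩
  · intro Θ hΘ
    rw [hRq, hRq]
    exact hglobal Θ hΘ
  · -- uniqueness
    intro Θ' hP' hmin'
    set V := Θ' - Φinf with hVdef
    have hPV : P * V = 0 := by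
      rw [hVdef, Matrix.mul_sub, hP', hPinf, sub_self]
    have hΘ' : Θ' = Φinf + V := by rw [hVdef]; abel
    have hq : qf Θ' = qf Φinf + qf V := by
      rw [hΘ', hqf]
      simp only
      rw [qf_add B hBs, hfo V hPV]
      ring
    have hle : qf Θ' ≤ qf Φinf := by
      have := hmin' Φinf hPinf
      rwa [hRq, hRq] at this
    have hqV : qf V ≤ 0 := by linarith
    have hV0 : V = 0 := by
      by_contra hne
      exact absurd hqV (not_le.mpr (qf_pos B hB hne))
    rw [hVdef, sub_eq_zero] at hV0
    exact hV0
  · -- convergence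
    set C : ℝ := Real.sqrt (fns (B * Φinf)) with hC
    have hC0 : 0 ≤ C := Real.sqrt_nonneg _
    set ρ : ℕ → ℝ := fun n => Real.sqrt ((δ n) ^ 2 + 2 * ω n * qf Φinf) with hρdef
    set g : ℕ → ℝ := fun n => ((δ n) ^ 2 / ω n / 2 + 2 * C * (ρ n + δ n)) / c with hg
    have key : ∀ n, fns (Φstar n - Φinf) ≤ g n := by
      intro n
      have hw : 0 < ω n := hωpos n
      set Ψ := Φstar n with hΨ
      set E := Ψ - Φinf with hE
      -- inequality from minimality
      have h1 : (1 / 2) * fns (P * Ψ - Φhat n) + ω n * qf Ψ ≤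
          (1 / 2) * (δ n) ^ 2 + ω n * qf Φinf := by
        have := hmin n Φinf
        rw [hRq, hRq, frobNorm_sq, frobNorm_sq] at this
        have hd : fns (P * Φinf - Φhat n) = (δ n) ^ 2 := by
          rw [hPinf, show P * Φ - Φhat n = -(Φhat n - P * Φ) from (neg_sub _ _).symm,
            fns_neg, hδ n, frobNorm_sq]
        rwa [hd] at this
      have hfns1 : 0 ≤ fns (P * Ψ - Φhat n) := fns_nonneg _
      have hqΨ : 0 ≤ qf Ψ := qf_nonneg B hB Ψ
      have hA : qf Ψ - qf Φinf ≤ (δ n) ^ 2 / ω n / 2 := by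
        have hwq : ω n * (qf Ψ - qf Φinf) ≤ (1 / 2) * (δ n) ^ 2 := by linarith
        rw [div_div, le_div_iff₀ (by positivity : (0 : ℝ) < ω n * 2)]
        nlinarith
      have hB2 : fns (P * Ψ - Φhat n) ≤ (δ n) ^ 2 + 2 * ω n * qf Φinf := by nlinarith
      have hρn : Real.sqrt (fns (P * Ψ - Φhat n)) ≤ ρ n := Real.sqrt_le_sqrt hB2
      have hPE : P * E = (P * Ψ - Φhat n) + (Φhat n - P * Φ) := by
        rw [hE, Matrix.mul_sub, hPinf]; abel
      have htri : Real.sqrt (fns (P * E)) ≤ ρ n + δ n := by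
        rw [hPE]
        refine le_trans (sqrt_fns_add_le _ _) (add_le_add hρn ?_)
        rw [hδ n, frobNorm_eq]
      -- decompose E
      set F := Pᵀ * (P * E) with hF
      set G := E - F with hG
      have hPG : P * G = 0 := by
        rw [hG, Matrix.mul_sub, hF, ← Matrix.mul_assoc, P_mul_Pt hMN, Matrix.one_mul, sub_self]
      have hEGF : E = G + F := by rw [hG]; abel
      have hipE : ip Φinf (B * E) = ip Φinf (B * F) := by
        rw [hEGF, Matrix.mul_add, ip_add_right, hfo G hPG, zero_add]
      have hfnsF : fns F = fns (P * E) := fns_Pt_mul hMN _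
      have hCS : |ip Φinf (B * F)| ≤ C * Real.sqrt (fns F) := by
        rw [ip_B_symm B hBs]
        exact abs_ip_le _ _
      have hiplb : -(C * (ρ n + δ n)) ≤ ip Φinf (B * E) := by
        rw [hipE]
        have h1 : C * Real.sqrt (fns F) ≤ C * (ρ n + δ n) := by
          apply mul_le_mul_of_nonneg_left _ hC0
          rw [hfnsF]
          exact htri
        have h2 := abs_le.mp (le_trans hCS h1)
        linarith [h2.1]
      -- expansion
      have hΨeq : Ψ = Φinf + E := by rw [hE]; abel
      have hexp : qf Ψ = qf Φinf + 2 * ip Φinf (B * E) + qf E := by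
        rw [hΨeq, hqf]
        simp only
        rw [qf_add B hBs]
      have hqE : qf E ≤ (δ n) ^ 2 / ω n / 2 + 2 * C * (ρ n + δ n) := by
        have : qf E = (qf Ψ - qf Φinf) - 2 * ip Φinf (B * E) := by linarith
        rw [this]
        linarith
      have hcE := hcoer E
      rw [hg]
      simp only
      rw [le_div_iff₀ hc]
      calc fns E * c = c * fns E := by ring
        _ ≤ qf E := hcE
        _ ≤ _ := hqE
    -- limit of g is 0
    have hρ0 : Tendsto ρ atTop (nhds 0) := by
      have hin : Tendsto (fun n => (δ n) ^ 2 + 2 * ω n * qf Φinf) atTop (nhds 0) := by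
        have h1 : Tendsto (fun n => (δ n) ^ 2) atTop (nhds 0) := by
          have := hδ0.pow 2
          simpa using this
        have h2 : Tendsto (fun n => 2 * ω n * qf Φinf) atTop (nhds 0) := by
          have := (hω0.const_mul 2).mul_const (qf Φinf)
          simpa [mul_comm, mul_assoc] using this
        simpa using h1.add h2
      have := (Real.continuous_sqrt.tendsto 0).comp hin
      simpa [hρdef, Function.comp_def] using this
    have hg0 : Tendsto g atTop (nhds 0) := by
      have h1 : Tendsto (fun n => (δ n) ^ 2 / ω n / 2) atTop (nhds 0) := by
        have := hratio.div_const 2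
        simpa using this
      have h2 : Tendsto (fun n => 2 * C * (ρ n + δ n)) atTop (nhds 0) := by
        have := (hρ0.add hδ0).const_mul (2 * C)
        simpa using this
      have := (h1.add h2).div_const c
      simpa [hg] using this
    have hf0 : Tendsto (fun n => fns (Φstar n - Φinf)) atTop (nhds 0) :=
      squeeze_zero (fun n => fns_nonneg _) key hg0
    have hsq0 : Tendsto (fun n => Real.sqrt (fns (Φstar n - Φinf))) atTop (nhds 0) := by
      have := (Real.continuous_sqrt.tendsto 0).comp hf0
      simpa [Function.comp_def] using this
    refine tendsto_pi_nhds.mpr ?_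
    intro i
    rw [tendsto_pi_nhds]
    intro j
    have habs : ∀ n, |Φstar n i j - Φinf i j| ≤ Real.sqrt (fns (Φstar n - Φinf)) := by
      intro n
      rw [← Real.sqrt_sq_eq_abs]
      apply Real.sqrt_le_sqrt
      have := entry_sq_le_fns (Φstar n - Φinf) i j
      simpa using this
    have hdiff : Tendsto (fun n => Φstar n i j - Φinf i j) atTop (nhds 0) := by
      rw [tendsto_zero_iff_abs_tendsto_zero]
      exact squeeze_zero (fun n => abs_nonneg _) habs hsq0
    have := hdiff.add (tendsto_const_nhds (x := Φinf i j))
    simpa using this
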